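/- Let σ_k denote elementary symmetric polynomials. For variables φ₁,...,φₘ > 0 and multiplicities k₁,...,kₘ with k₁+⋯+kₘ = n, define σ_k^1 := σ_k of the multiset consisting of 1/φ₁ with multiplicity k₁−1 and 1/φ_l with multiplicity k_l for l ≥ 2. Then σ_k^1 = B_k + B_{k−1}σ₁(1/φ₂,...,1/φₘ) + ⋯ + B_{k−m+1}σ_{m−1}(1/φ₂,...,1/φₘ), where B_k := Σ_{|α|=k} C(k₁−1,α₁)⋯C(kₘ−1,αₘ) ∏_l φ_l^{−α_l}. -/

import Mathlib

open Polynomial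

private lemma esymm_cons' (a : ℝ) (s : Multiset ℝ) (j : ℕ) :
    (a ::ₘ s).esymm (j+1) = s.esymm (j+1) + a * s.esymm j := by
  rw [Multiset.esymm, Multiset.powersetCard_cons, Multiset.map_add, Multiset.sum_add,
    Multiset.map_map]
  congr 1
  rw [Multiset.esymm, ← Multiset.sum_map_mul_left]
  apply congr_arg
  apply Multiset.map_congr rfl
  intro t _
  simp [Multiset.prod_cons]

private lemma coeff_gp (s : Multiset ℝ) (j : ℕ) :
    ((s.map fun r => 1 + C r * X).prod).coeff j = s.esymm j := by
  induction s using Multiset.induction generalizing j with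
  | empty =>
    cases j with
    | zero => simp [Multiset.esymm]
    | succ j => simp [Multiset.esymm, Multiset.powersetCard_zero_right, coeff_one]
  | cons a s ih =>
    rw [Multiset.map_cons, Multiset.prod_cons]
    cases j with
    | zero =>
      rw [Polynomial.mul_coeff_zero]
      simp [ih, Multiset.esymm, Multiset.powersetCard_zero_left]
    | succ j =>
      rw [add_mul, one_mul, mul_assoc, Polynomial.coeff_add, Polynomial.coeff_C_mul,
        Polynomial.coeff_X_mul, ih, ih, esymm_cons']

private lemma sum_adt_succ {M : Type*} [AddCommMonoid M] (m n : ℕ) (f : (Fin (m+1) → ℕ) → M) :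
    ∑ α ∈ Finset.Nat.antidiagonalTuple (m+1) n, f α
      = ∑ p ∈ Finset.HasAntidiagonal.antidiagonal n, ∑ β ∈ Finset.Nat.antidiagonalTuple m p.2,
          f (Fin.cons p.1 β) := by
  rw [Finset.sum_sigma']
  refine Finset.sum_nbij'
    (i := fun (α : Fin (m+1) → ℕ) => (⟨(α 0, ∑ i : Fin m, α i.succ), Fin.tail α⟩ :
      (_ : ℕ × ℕ) × (Fin m → ℕ)))
    (j := fun a => Fin.cons a.1.1 a.2) ?_ ?_ ?_ ?_ ?_
  · intro α hα
    rw [Finset.Nat.mem_antidiagonalTuple] at hα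
    rw [Finset.mem_sigma, Finset.Nat.mem_antidiagonalTuple]
    refine ⟨Finset.HasAntidiagonal.mem_antidiagonal.2 ?_, rfl⟩
    rw [← hα, Fin.sum_univ_succ]
  · intro a ha
    rw [Finset.mem_sigma, Finset.HasAntidiagonal.mem_antidiagonal, Finset.Nat.mem_antidiagonalTuple] at ha
    rw [Finset.Nat.mem_antidiagonalTuple, Fin.sum_cons, ha.2, ha.1]
  · intro α _
    simp [Fin.cons_self_tail]
  · intro a ha
    rw [Finset.mem_sigma, Finset.Nat.mem_antidiagonalTuple] at ha
    ext1
    · simp [Fin.sum_cons, ha.2, Fin.cons_succ]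
    · simp [Fin.tail_cons]
  · intro α _
    simp [Fin.cons_self_tail]

private lemma coeff_prod_fin : ∀ (m : ℕ) (p : Fin m → Polynomial ℝ) (n : ℕ),
    (∏ l, p l).coeff n = ∑ α ∈ Finset.Nat.antidiagonalTuple m n, ∏ l, (p l).coeff (α l)
  | 0, p, 0 => by simp
  | 0, p, (n+1) => by simp [Polynomial.coeff_one]
  | (m+1), p, n => by
    rw [Fin.prod_univ_succ, Polynomial.coeff_mul, sum_adt_succ]
    refine Finset.sum_congr rfl fun q hq => ?_
    rw [coeff_prod_fin m (fun l => p l.succ) q.2, Finset.mul_sum]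
    refine Finset.sum_congr rfl fun β _ => ?_
    rw [Fin.prod_univ_succ]
    simp [Fin.cons_zero, Fin.cons_succ]

private lemma coeff_one_add_pow (x : ℝ) (r a : ℕ) :
    ((1 + C x * X : Polynomial ℝ) ^ r).coeff a = (r.choose a : ℝ) * x ^ a := by
  rw [add_comm, add_pow, ← lcoeff_apply, map_sum]
  simp only [one_pow, mul_one, lcoeff_apply, mul_pow, ← C_pow, ← C_eq_natCast, coeff_mul_C,
    coeff_C_mul, coeff_X_pow]
  rw [Finset.sum_eq_single a]
  · simp [mul_comm]
  · intro b _ hba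
    simp [if_neg (Ne.symm hba)]
  · intro h
    rw [Finset.mem_range, not_lt] at h
    simp [Nat.choose_eq_zero_of_lt h]

private lemma esymm_eq_zero' (s : Multiset ℝ) {j : ℕ} (h : Multiset.card s < j) :
    s.esymm j = 0 := by
  rw [Multiset.esymm, Multiset.powersetCard_eq_empty _ h]
  simp

/-- For positive `φ₀,...,φₘ` (indexed by `Fin (m+1)`) with multiplicities
`k₀,...,kₘ ≥ 1` summing to `n`, let `σ_k^1` be the `k`-th elementary symmetric polynomial of
the multiset consisting of `1/φ₀` with multiplicity `k₀ − 1` and `1/φ_l` with multiplicity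
`k_l` for `l ≥ 1`.  Then `σ_k^1 = Σ_{j=0}^{m} B_{k−j} σ_j(1/φ₁,...,1/φₘ)` (terms with `k−j < 0`
omitted), where `B_k = Σ_{|α|=k} C(k₀−1,α₀)⋯C(kₘ−1,αₘ) ∏_l φ_l^{−α_l}`. -/
theorem stmt10 (m n k : ℕ) (φ : Fin (m + 1) → ℝ) (kmult : Fin (m + 1) → ℕ)
    (hφ : ∀ l, 0 < φ l) (hk : ∀ l, 1 ≤ kmult l) (hsum : ∑ l, kmult l = n)
    (B : ℕ → ℝ)
    (hB : ∀ j, B j = ∑ α ∈ Finset.Nat.antidiagonalTuple (m + 1) j,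
        ∏ l : Fin (m + 1), ((kmult l - 1).choose (α l) : ℝ) * (φ l)⁻¹ ^ α l) :
    (Multiset.replicate (kmult 0 - 1) (φ 0)⁻¹
        + ∑ l ∈ Finset.univ.erase (0 : Fin (m + 1)),
            Multiset.replicate (kmult l) (φ l)⁻¹).esymm k
      = ∑ j ∈ Finset.range (m + 1),
          (if j ≤ k then B (k - j) else 0) *
            (((Finset.univ.erase (0 : Fin (m + 1))).val.map fun l => (φ l)⁻¹).esymm j) := by
  classical
  set g : ℝ → Polynomial ℝ := fun r => 1 + C r * X with hg
  set Ms : Multiset ℝ := (Finset.univ.erase (0 : Fin (m + 1))).val.map fun l => (φ l)⁻¹ with hMs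
  set T : Multiset ℝ := ∑ l : Fin (m+1), Multiset.replicate (kmult l - 1) (φ l)⁻¹ with hT
  -- decomposition of the multiset
  have hS : Multiset.replicate (kmult 0 - 1) (φ 0)⁻¹
        + ∑ l ∈ Finset.univ.erase (0 : Fin (m + 1)), Multiset.replicate (kmult l) (φ l)⁻¹
      = T + Ms := by
    have h1 : ∀ l : Fin (m+1), Multiset.replicate (kmult l) (φ l)⁻¹
        = Multiset.replicate (kmult l - 1) (φ l)⁻¹ + {(φ l)⁻¹} := by
      intro l
      conv_lhs => rw [← Nat.succ_pred_eq_of_pos (hk l)]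
      rw [Multiset.replicate_succ, ← Multiset.singleton_add, add_comm]
      rfl
    have h2 : (∑ l ∈ Finset.univ.erase (0:Fin (m+1)), ({(φ l)⁻¹} : Multiset ℝ)) = Ms := by
      rw [Finset.sum_eq_multiset_sum, hMs]
      rw [show ((Finset.univ.erase (0:Fin (m+1))).val.map fun l => ({(φ l)⁻¹} : Multiset ℝ))
          = ((Finset.univ.erase (0:Fin (m+1))).val.map fun l => (φ l)⁻¹).map
              (fun a => ({a} : Multiset ℝ)) from (Multiset.map_map _ _ _).symm]
      rw [Multiset.sum_map_singleton]
    calc Multiset.replicate (kmult 0 - 1) (φ 0)⁻¹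
          + ∑ l ∈ Finset.univ.erase (0 : Fin (m + 1)), Multiset.replicate (kmult l) (φ l)⁻¹
        = Multiset.replicate (kmult 0 - 1) (φ 0)⁻¹
          + ((∑ l ∈ Finset.univ.erase (0 : Fin (m + 1)),
               Multiset.replicate (kmult l - 1) (φ l)⁻¹)
             + ∑ l ∈ Finset.univ.erase (0:Fin (m+1)), ({(φ l)⁻¹} : Multiset ℝ)) := by
          rw [← Finset.sum_add_distrib]
          exact congrArg _ (Finset.sum_congr rfl fun l _ => h1 l)
      _ = T + Ms := by
          rw [← add_assoc, h2, hT, ← Finset.add_sum_erase _ _ (Finset.mem_univ 0)]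
  -- the coefficients of the generating polynomial of T are the B's
  have hTc : ∀ a, ((T.map g).prod).coeff a = B a := by
    intro a
    have hmap : T.map g = ∑ l : Fin (m+1), Multiset.replicate (kmult l - 1) (g (φ l)⁻¹) := by
      rw [hT, ← Multiset.coe_mapAddMonoidHom g, map_sum]
      simp
    rw [hmap, Multiset.prod_sum]
    rw [Finset.prod_congr rfl fun (l : Fin (m+1)) _ => Multiset.prod_replicate _ _,
      coeff_prod_fin, hB]
    refine Finset.sum_congr rfl fun α _ => Finset.prod_congr rfl fun l _ => ?_
    rw [hg, coeff_one_add_pow]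
  -- card of Ms
  have hcard : Multiset.card Ms = m := by
    rw [hMs, Multiset.card_map, ← Finset.card_def, Finset.card_erase_of_mem (Finset.mem_univ 0),
      Finset.card_univ, Fintype.card_fin]
    rfl
  -- main computation
  rw [hS, ← coeff_gp, Multiset.map_add, Multiset.prod_add, Polynomial.coeff_mul]
  have hconv : ∑ p ∈ Finset.HasAntidiagonal.antidiagonal k,
        ((T.map g).prod).coeff p.1 * ((Ms.map g).prod).coeff p.2
      = ∑ j ∈ Finset.range (k+1), B (k - j) * Ms.esymm j := by
    rw [Finset.Nat.sum_antidiagonal_eq_sum_range_succ_mk]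
    rw [← Finset.sum_range_reflect]
    refine Finset.sum_congr rfl fun j hj => ?_
    rw [Finset.mem_range] at hj
    have hj' : j ≤ k := Nat.lt_succ_iff.mp hj
    rw [hTc, coeff_gp]
    have : k + 1 - 1 - j = k - j := by omega
    rw [this]
    have : k - (k - j) = j := by omega
    rw [this]
  rw [hconv]
  -- now compare the two range sums
  have hzero : ∀ j, m < j → Ms.esymm j = 0 := fun j hj => esymm_eq_zero' Ms (hcard ▸ hj)
  have e1 : ∑ j ∈ Finset.range (k+1), B (k - j) * Ms.esymm j
      = ∑ j ∈ Finset.range (k+1), (if j ≤ k then B (k - j) else 0) * Ms.esymm j :=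
    Finset.sum_congr rfl fun j hj => by
      rw [if_pos (Nat.lt_succ_iff.mp (Finset.mem_range.mp hj))]
  have e2 := Finset.sum_subset (Finset.range_subset_range.2 (by omega : k+1 ≤ max k m + 1))
      (f := fun j => (if j ≤ k then B (k-j) else 0) * Ms.esymm j)
      (fun j hj hj' => by
        rw [Finset.mem_range, not_lt] at hj'
        show (if j ≤ k then B (k-j) else 0) * Ms.esymm j = 0
        rw [if_neg (by omega), zero_mul])
  have e3 := Finset.sum_subset (Finset.range_subset_range.2 (by omega : m+1 ≤ max k m + 1))
      (f := fun j => (if j ≤ k then B (k-j) else 0) * Ms.esymm j)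
      (fun j hj hj' => by
        rw [Finset.mem_range, not_lt] at hj'
        show (if j ≤ k then B (k-j) else 0) * Ms.esymm j = 0
        rw [hzero j (by omega), mul_zero])
  rw [e1, e2, ← e3]
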